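/- In the random-permutation algorithm with independent uniformly random preference permutations $\sigma_1, \dots, \sigma_w$, for any two adjacent task sets $T_1, T_2 \subseteq [t]$ of size $w$, the probability that worker $i$ is assigned to different tasks in the two runs is at most $2/(w - i + 1)$, and hence the expected number of workers whose assignment differs is at most $\sum_{i=1}^w 2/(w-i+1) = O(\log w)$. -/

import Mathlib

open Finset

/-- The element of `A` minimizing the preference-rank function `f`
(the "most preferred" task of `A`); junk value if `A = ∅`. -/
noncomputable def argminTask {t : ℕ} (ht : 0 < t) (f : Fin t → ℕ) (A : Finset (Fin t)) :
    Fin t :=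
  if h : A.Nonempty then (A.exists_min_image f h).choose else ⟨0, ht⟩

/-- The set of `i`-remainder tasks of the greedy algorithm. -/
noncomputable def remainderTasks {t : ℕ} (ht : 0 < t) (σ : ℕ → Fin t → ℕ)
    (T : Finset (Fin t)) : ℕ → Finset (Fin t)
  | 0 => T
  | i + 1 =>
      (remainderTasks ht σ T i).erase
        (argminTask ht (σ i) (remainderTasks ht σ T i))

/-- The rank functions induced by a family `ρ` of preference permutations:
worker `i` prefers task `τ` over `τ'` iff `ρ i τ < ρ i τ'`. -/
noncomputable def rankOf {w t : ℕ} (ρ : Fin w → Equiv.Perm (Fin t)) : ℕ → Fin t → ℕ :=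
  fun i τ => if h : i < w then ((ρ ⟨i, h⟩) τ : ℕ) else (τ : ℕ)

/-- The task assigned to worker `i` (0-indexed) by the random-permutation algorithm with
preference permutations `ρ`, run on the task set `T`. -/
noncomputable def assignedTask {w t : ℕ} (ht : 0 < t) (ρ : Fin w → Equiv.Perm (Fin t))
    (T : Finset (Fin t)) (i : ℕ) : Fin t :=
  argminTask ht (rankOf ρ i) (remainderTasks ht (rankOf ρ) T i)

section Aux

variable {t : ℕ}

lemma argminTask_spec (ht : 0 < t) {f : Fin t → ℕ} {A : Finset (Fin t)} (h : A.Nonempty) :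
    argminTask ht f A ∈ A ∧ ∀ x ∈ A, f (argminTask ht f A) ≤ f x := by
  rw [argminTask, dif_pos h]
  obtain ⟨h1, h2⟩ := (A.exists_min_image f h).choose_spec
  exact ⟨h1, h2⟩

lemma argminTask_eq (ht : 0 < t) {f : Fin t → ℕ} (hf : Function.Injective f)
    {A : Finset (Fin t)} {b : Fin t} (hb : b ∈ A) (hmin : ∀ x ∈ A, f b ≤ f x) :
    argminTask ht f A = b := by
  obtain ⟨hm, hle⟩ := argminTask_spec ht (⟨b, hb⟩ : A.Nonempty) (f := f)
  exact hf (le_antisymm (hle b hb) (hmin _ hm))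

lemma erase_argmin_diff (ht : 0 < t) {f : Fin t → ℕ} (hf : Function.Injective f)
    {A B : Finset (Fin t)} (h : (A \ B).card ≤ 1) :
    ((A.erase (argminTask ht f A)) \ (B.erase (argminTask ht f B))).card ≤ 1 := by
  rcases B.eq_empty_or_nonempty with hB | hB
  · subst hB
    calc ((A.erase (argminTask ht f A)) \ _).card
        ≤ (A \ (∅ : Finset (Fin t))).card := by
          apply card_le_card
          intro c hc
          rw [mem_sdiff] at hc ⊢
          exact ⟨mem_of_mem_erase hc.1, by simp⟩
      _ ≤ 1 := by simpa using h
  set a := argminTask ht f A with ha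
  set b := argminTask ht f B with hbdef
  by_cases hbd : b ∈ (A.erase a) \ (B.erase b)
  · have hsub : (A.erase a) \ (B.erase b) ⊆ {b} := by
      intro c hc
      rw [mem_singleton]
      by_contra hcb
      rw [mem_sdiff, mem_erase] at hc hbd
      have hbA : b ∈ A := hbd.1.2
      have hba : b ≠ a := hbd.1.1
      have hAmin := (argminTask_spec ht (⟨b, hbA⟩ : A.Nonempty) (f := f)).2
      have hBmin := (argminTask_spec ht hB (f := f)).2
      have haA := (argminTask_spec ht (⟨b, hbA⟩ : A.Nonempty) (f := f)).1
      rw [← ha] at hAmin haA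
      rw [← hbdef] at hBmin
      have hfab : f a < f b := lt_of_le_of_ne (hAmin b hbA) (fun hfe => hba (hf hfe).symm)
      have haB : a ∉ B := by
        intro haB
        have := hBmin a haB
        omega
      have hcA : c ∈ A := hc.1.2
      have hcB : c ∉ B := by
        intro hcB
        exact hc.2 (mem_erase.mpr ⟨hcb, hcB⟩)
      have hca : c ≠ a := hc.1.1
      have : ({a, c} : Finset (Fin t)) ⊆ A \ B := by
        intro x hx
        rw [mem_insert, mem_singleton] at hx
        rcases hx with rfl | rfl
        · exact mem_sdiff.mpr ⟨haA, haB⟩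
        · exact mem_sdiff.mpr ⟨hcA, hcB⟩
      have h2 : ({a, c} : Finset (Fin t)).card = 2 := by
        rw [card_insert_of_notMem (by simpa using (Ne.symm hca)), card_singleton]
      have := card_le_card this
      omega
    calc _ ≤ ({b} : Finset (Fin t)).card := card_le_card hsub
      _ = 1 := card_singleton b
  · refine le_trans (card_le_card ?_) h
    intro c hc
    rw [mem_sdiff] at hc ⊢
    refine ⟨mem_of_mem_erase hc.1, fun hcB => ?_⟩
    have hcb : c ≠ b := by
      rintro rfl
      exact hbd (mem_sdiff.mpr hc)
    exact hc.2 (mem_erase.mpr ⟨hcb, hcB⟩)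

lemma remainderTasks_card (ht : 0 < t) (σ : ℕ → Fin t → ℕ) (T : Finset (Fin t))
    (i : ℕ) (hi : i ≤ T.card) :
    (remainderTasks ht σ T i).card = T.card - i := by
  induction i with
  | zero => simp [remainderTasks]
  | succ n ih =>
    have h1 := ih (by omega)
    have hne : (remainderTasks ht σ T n).Nonempty := by
      rw [← card_pos, h1]; omega
    rw [remainderTasks, card_erase_of_mem (argminTask_spec ht hne).1, h1]
    omega

lemma remainderTasks_nonempty (ht : 0 < t) (σ : ℕ → Fin t → ℕ) (T : Finset (Fin t))
    (i : ℕ) (hi : i < T.card) : (remainderTasks ht σ T i).Nonempty := by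
  rw [← card_pos, remainderTasks_card ht σ T i (le_of_lt hi)]; omega

lemma remainderTasks_diff (ht : 0 < t) {σ : ℕ → Fin t → ℕ}
    (hσ : ∀ j, Function.Injective (σ j)) {T₁ T₂ : Finset (Fin t)}
    (h : (T₁ \ T₂).card ≤ 1) (i : ℕ) :
    ((remainderTasks ht σ T₁ i) \ (remainderTasks ht σ T₂ i)).card ≤ 1 := by
  induction i with
  | zero => exact h
  | succ n ih => exact erase_argmin_diff ht (hσ n) ih

lemma remainderTasks_congr (ht : 0 < t) {σ σ' : ℕ → Fin t → ℕ} {T : Finset (Fin t)}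
    (i : ℕ) (h : ∀ j < i, σ j = σ' j) :
    remainderTasks ht σ T i = remainderTasks ht σ' T i := by
  induction i with
  | zero => rfl
  | succ n ih =>
    have hn := ih (fun j hj => h j (by omega))
    rw [remainderTasks, remainderTasks, hn, h n (by omega)]

end Aux


section Count

variable {t : ℕ}

lemma coe_perm_inj (π : Equiv.Perm (Fin t)) :
    Function.Injective (fun τ : Fin t => (π τ : ℕ)) :=
  fun x y h => π.injective (Fin.val_injective h)

lemma rankOf_injective {w : ℕ} (ρ : Fin w → Equiv.Perm (Fin t)) (j : ℕ) :
    Function.Injective (rankOf ρ j) := by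
  intro x y h
  unfold rankOf at h
  split_ifs at h
  · exact (ρ _).injective (Fin.val_injective h)
  · exact Fin.val_injective h

lemma argmin_mul_swap (ht : 0 < t) {U : Finset (Fin t)} {u v : Fin t}
    (hu : u ∈ U) (hv : v ∈ U) {π : Equiv.Perm (Fin t)}
    (h : argminTask ht (fun τ => (π τ : ℕ)) U = u) :
    argminTask ht (fun τ => ((π * Equiv.swap u v) τ : ℕ)) U = v := by
  apply argminTask_eq ht (coe_perm_inj _) hv
  intro x hx
  have hle := (argminTask_spec ht (⟨u, hu⟩ : U.Nonempty) (f := fun τ => (π τ : ℕ))).2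
  rw [h] at hle
  have h2 : Equiv.swap u v x ∈ U := by
    rcases eq_or_ne x u with rfl | hxu
    · simpa [Equiv.swap_apply_left] using hv
    rcases eq_or_ne x v with rfl | hxv
    · simpa [Equiv.swap_apply_right] using hu
    · rwa [Equiv.swap_apply_of_ne_of_ne hxu hxv]
  simpa [Equiv.Perm.mul_apply, Equiv.swap_apply_right] using hle _ h2

lemma fiber_card_eq (ht : 0 < t) (U : Finset (Fin t)) {u v : Fin t}
    (hu : u ∈ U) (hv : v ∈ U) :
    (univ.filter (fun π : Equiv.Perm (Fin t) =>
        argminTask ht (fun τ => (π τ : ℕ)) U = u)).card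
      = (univ.filter (fun π : Equiv.Perm (Fin t) =>
        argminTask ht (fun τ => (π τ : ℕ)) U = v)).card := by
  apply Finset.card_bij' (fun π _ => π * Equiv.swap u v) (fun π _ => π * Equiv.swap u v)
  · intro π hπ
    rw [mem_filter] at hπ ⊢
    exact ⟨mem_univ _, argmin_mul_swap ht hu hv hπ.2⟩
  · intro π hπ
    rw [mem_filter] at hπ ⊢
    rw [Equiv.swap_comm]
    exact ⟨mem_univ _, argmin_mul_swap ht hv hu hπ.2⟩
  · intro π _
    rw [mul_assoc, Equiv.swap_mul_self, mul_one]
  · intro π _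
    rw [mul_assoc, Equiv.swap_mul_self, mul_one]

lemma fiber_mul (ht : 0 < t) (U : Finset (Fin t)) (hU : U.Nonempty) {u : Fin t}
    (hu : u ∈ U) :
    (univ.filter (fun π : Equiv.Perm (Fin t) =>
        argminTask ht (fun τ => (π τ : ℕ)) U = u)).card * U.card
      = Fintype.card (Equiv.Perm (Fin t)) := by
  have hpart : (univ : Finset (Equiv.Perm (Fin t))).card
      = ∑ v ∈ U, (univ.filter (fun π : Equiv.Perm (Fin t) =>
          argminTask ht (fun τ => (π τ : ℕ)) U = v)).card :=
    card_eq_sum_card_fiberwise (fun π _ => (argminTask_spec ht hU).1)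
  rw [Fintype.card, hpart,
    Finset.sum_congr rfl (fun v hv => fiber_card_eq ht U hv hu), sum_const,
    smul_eq_mul, mul_comm]

end Count

lemma count_bound {w t : ℕ} (ht : 0 < t) (T₁ T₂ : Finset (Fin t))
    (h₁ : T₁.card = w) (h₂ : T₂.card = w)
    (hadj₁ : (T₁ \ T₂).card ≤ 1) (hadj₂ : (T₂ \ T₁).card ≤ 1)
    (i : ℕ) (hi : i < w) :
    (univ.filter (fun ρ : Fin w → Equiv.Perm (Fin t) =>
        assignedTask ht ρ T₁ i ≠ assignedTask ht ρ T₂ i)).card * (w - i)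
      ≤ 2 * Fintype.card (Fin w → Equiv.Perm (Fin t)) := by
  classical
  set P := Equiv.Perm (Fin t) with hP
  set i' : Fin w := ⟨i, hi⟩ with hi'
  set e := Equiv.funSplitAt i' P with he
  set E := fun ρ : Fin w → P => assignedTask ht ρ T₁ i ≠ assignedTask ht ρ T₂ i with hE
  have hcardsplit : (univ.filter E).card
      = ∑ y : {j // j ≠ i'} → P, (univ.filter (fun x : P => E (e.symm (x, y)))).card := by
    rw [card_filter, ← Equiv.sum_comp e.symm (fun ρ => if E ρ then 1 else 0),
      Fintype.sum_prod_type, Finset.sum_comm]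
    exact sum_congr rfl fun y _ => (card_filter _ _).symm
  have hfiber : ∀ y : {j // j ≠ i'} → P,
      (univ.filter (fun x : P => E (e.symm (x, y)))).card * (w - i)
        ≤ 2 * Fintype.card P := by
    intro y
    set ρ₀ : Fin w → P := e.symm (1, y) with hρ₀
    set A := remainderTasks ht (rankOf ρ₀) T₁ i with hA
    set B := remainderTasks ht (rankOf ρ₀) T₂ i with hB
    set U := A ∪ B with hU
    set D := (A \ B) ∪ (B \ A) with hD
    have hrem : ∀ (x : P) (T : Finset (Fin t)),
        remainderTasks ht (rankOf (e.symm (x, y))) T i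
          = remainderTasks ht (rankOf ρ₀) T i := by
      intro x T
      apply remainderTasks_congr
      intro j hj
      funext τ
      unfold rankOf
      have hjw : j < w := lt_trans hj hi
      rw [dif_pos hjw, dif_pos hjw]
      have hne : (⟨j, hjw⟩ : Fin w) ≠ i' := by
        simp only [hi', ne_eq, Fin.mk.injEq]
        omega
      rw [hρ₀, he]
      simp [Equiv.funSplitAt_symm_apply, hne]
    have hAcard : A.card = w - i := by
      rw [hA, remainderTasks_card ht _ T₁ i (by omega), h₁]
    have hAne : A.Nonempty := by rw [← card_pos, hAcard]; omega
    have hUne : U.Nonempty := hAne.mono subset_union_left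
    have hUcard : w - i ≤ U.card := hAcard ▸ card_le_card subset_union_left
    have hABd : (A \ B).card ≤ 1 := remainderTasks_diff ht (rankOf_injective ρ₀) hadj₁ i
    have hBAd : (B \ A).card ≤ 1 := remainderTasks_diff ht (rankOf_injective ρ₀) hadj₂ i
    have hDcard : D.card ≤ 2 := le_trans (card_union_le _ _) (by omega)
    have hDU : D ⊆ U := by
      intro x hx
      rw [hD, mem_union, mem_sdiff, mem_sdiff] at hx
      rw [hU, mem_union]
      rcases hx with h' | h'
      · exact Or.inl h'.1
      · exact Or.inr h'.1
    set g : P → Fin t := fun x => argminTask ht (fun τ => (x τ : ℕ)) U with hg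
    have hkey : ∀ x : P, E (e.symm (x, y)) → g x ∈ D := by
      intro x hEx
      by_contra hgx
      apply hEx
      have hgU := (argminTask_spec ht hUne (f := fun τ => (x τ : ℕ))).1
      have hgmin := (argminTask_spec ht hUne (f := fun τ => (x τ : ℕ))).2
      have hgU' : g x ∈ U := hgU
      have hgmin' : ∀ z ∈ U, (x (g x) : ℕ) ≤ (x z : ℕ) := hgmin
      have hgAB : g x ∈ A ∧ g x ∈ B := by
        rw [hD, mem_union, mem_sdiff, mem_sdiff] at hgx
        rw [hU, mem_union] at hgU'
        push_neg at hgx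
        rcases hgU' with h' | h'
        · exact ⟨h', hgx.1 h'⟩
        · exact ⟨hgx.2 h', h'⟩
      have hrank : rankOf (e.symm (x, y)) i = fun τ => ((x τ : ℕ)) := by
        funext τ
        unfold rankOf
        rw [dif_pos hi]
        rw [he]
        simp [Equiv.funSplitAt_symm_apply, ← hi']
      show assignedTask ht (e.symm (x, y)) T₁ i = assignedTask ht (e.symm (x, y)) T₂ i
      unfold assignedTask
      rw [hrem x T₁, hrem x T₂, ← hA, ← hB, hrank,
        argminTask_eq ht (coe_perm_inj x) hgAB.1
          (fun z hz => hgmin' z (mem_union_left _ hz)),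
        argminTask_eq ht (coe_perm_inj x) hgAB.2
          (fun z hz => hgmin' z (mem_union_right _ hz))]
    calc (univ.filter (fun x : P => E (e.symm (x, y)))).card * (w - i)
        ≤ (univ.filter (fun x : P => g x ∈ D)).card * U.card := by
          apply Nat.mul_le_mul _ hUcard
          apply card_le_card
          intro x hx
          rw [mem_filter] at hx ⊢
          exact ⟨hx.1, hkey x hx.2⟩
      _ = ∑ u ∈ D, (univ.filter (fun x : P => g x = u)).card * U.card := by
          rw [← sum_mul]
          congr 1
          rw [card_eq_sum_card_fiberwise
            (f := g) (s := univ.filter (fun x : P => g x ∈ D)) (t := D)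
              (fun x hx => (mem_filter.mp (mem_coe.mp hx)).2)]
          apply sum_congr rfl
          intro u hu
          rw [filter_filter]
          congr 1
          apply filter_congr
          intro x _
          constructor
          · exact And.right
          · intro hgu; exact ⟨hgu ▸ hu, hgu⟩
      _ = D.card * Fintype.card P := by
          rw [sum_congr rfl (fun u hu => fiber_mul ht U hUne (hDU hu)), sum_const,
            smul_eq_mul]
      _ ≤ 2 * Fintype.card P := Nat.mul_le_mul_right _ hDcard
  calc (univ.filter E).card * (w - i)
      = ∑ y : {j // j ≠ i'} → P,
          (univ.filter (fun x : P => E (e.symm (x, y)))).card * (w - i) := by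
        rw [hcardsplit, sum_mul]
    _ ≤ ∑ _y : {j // j ≠ i'} → P, 2 * Fintype.card P :=
        sum_le_sum (fun y _ => hfiber y)
    _ = Fintype.card ({j // j ≠ i'} → P) * (2 * Fintype.card P) := by
        rw [sum_const, smul_eq_mul]
        rfl
    _ = 2 * Fintype.card (Fin w → P) := by
        rw [Fintype.card_congr e, Fintype.card_prod]
        ring


/-- with independent uniformly random preference permutations, for adjacent
task sets `T₁, T₂` of size `w`, (i) the probability that worker `i` (0-indexed) is assigned
different tasks in the two runs is at most `2/(w-i)`, and (ii) the expected number of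
workers whose assignment differs is at most `∑_{i<w} 2/(w-i)`, which is `O(log w)`. -/
theorem random_permutation_expected_switching_cost (w t : ℕ) (ht : 0 < t) (hw : 0 < w)
    (T₁ T₂ : Finset (Fin t)) (h₁ : T₁.card = w) (h₂ : T₂.card = w)
    (hadj₁ : (T₁ \ T₂).card = 1) (hadj₂ : (T₂ \ T₁).card = 1) :
    (∀ i : ℕ, i < w →
      ((Finset.univ.filter (fun ρ : Fin w → Equiv.Perm (Fin t) =>
          assignedTask ht ρ T₁ i ≠ assignedTask ht ρ T₂ i)).card : ℝ) /
        (Fintype.card (Fin w → Equiv.Perm (Fin t)) : ℝ) ≤ 2 / ((w : ℝ) - i)) ∧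
    (∑ ρ : Fin w → Equiv.Perm (Fin t),
        ((Finset.univ.filter (fun i : Fin w =>
            assignedTask ht ρ T₁ i ≠ assignedTask ht ρ T₂ i)).card : ℝ)) /
        (Fintype.card (Fin w → Equiv.Perm (Fin t)) : ℝ)
      ≤ ∑ i ∈ Finset.range w, 2 / ((w : ℝ) - i) ∧
    ∑ i ∈ Finset.range w, 2 / ((w : ℝ) - i) ≤ 2 * (Real.log w + 1) := by
  have hcardpos : 0 < Fintype.card (Fin w → Equiv.Perm (Fin t)) := Fintype.card_pos
  have part1 : ∀ i : ℕ, i < w →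
      ((Finset.univ.filter (fun ρ : Fin w → Equiv.Perm (Fin t) =>
          assignedTask ht ρ T₁ i ≠ assignedTask ht ρ T₂ i)).card : ℝ) /
        (Fintype.card (Fin w → Equiv.Perm (Fin t)) : ℝ) ≤ 2 / ((w : ℝ) - i) := by
    intro i hi
    have hb := count_bound ht T₁ T₂ h₁ h₂ (le_of_eq hadj₁) (le_of_eq hadj₂) i hi
    have hwi : (0 : ℝ) < (w : ℝ) - i := by
      have : (i : ℝ) < w := by exact_mod_cast hi
      linarith
    rw [div_le_div_iff₀ (by exact_mod_cast hcardpos) hwi]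
    have hcast : ((w : ℝ) - i) = ((w - i : ℕ) : ℝ) := by
      rw [Nat.cast_sub (le_of_lt hi)]
    rw [hcast]
    calc ((Finset.univ.filter (fun ρ : Fin w → Equiv.Perm (Fin t) =>
          assignedTask ht ρ T₁ i ≠ assignedTask ht ρ T₂ i)).card : ℝ) * ((w - i : ℕ) : ℝ)
        = (((Finset.univ.filter (fun ρ : Fin w → Equiv.Perm (Fin t) =>
          assignedTask ht ρ T₁ i ≠ assignedTask ht ρ T₂ i)).card * (w - i) : ℕ) : ℝ) := by
          push_cast; ring
      _ ≤ ((2 * Fintype.card (Fin w → Equiv.Perm (Fin t)) : ℕ) : ℝ) := by exact_mod_cast hb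
      _ = 2 * (Fintype.card (Fin w → Equiv.Perm (Fin t)) : ℝ) := by push_cast; ring
  refine ⟨part1, ?_, ?_⟩
  · have hswap : ∑ ρ : Fin w → Equiv.Perm (Fin t),
        ((Finset.univ.filter (fun i : Fin w =>
            assignedTask ht ρ T₁ i ≠ assignedTask ht ρ T₂ i)).card : ℝ)
        = ∑ i : Fin w, ((Finset.univ.filter (fun ρ : Fin w → Equiv.Perm (Fin t) =>
            assignedTask ht ρ T₁ (i : ℕ) ≠ assignedTask ht ρ T₂ (i : ℕ))).card : ℝ) := by
      simp only [card_filter, Nat.cast_sum, Nat.cast_ite, Nat.cast_one, Nat.cast_zero]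
      exact Finset.sum_comm
    calc (∑ ρ : Fin w → Equiv.Perm (Fin t),
          ((Finset.univ.filter (fun i : Fin w =>
              assignedTask ht ρ T₁ i ≠ assignedTask ht ρ T₂ i)).card : ℝ)) /
          (Fintype.card (Fin w → Equiv.Perm (Fin t)) : ℝ)
        = ∑ i : Fin w, ((Finset.univ.filter (fun ρ : Fin w → Equiv.Perm (Fin t) =>
            assignedTask ht ρ T₁ (i : ℕ) ≠ assignedTask ht ρ T₂ (i : ℕ))).card : ℝ) /
            (Fintype.card (Fin w → Equiv.Perm (Fin t)) : ℝ) := by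
          rw [hswap, sum_div]
      _ ≤ ∑ i : Fin w, 2 / ((w : ℝ) - (i : ℕ)) :=
          sum_le_sum fun i _ => part1 (i : ℕ) i.isLt
      _ = ∑ i ∈ Finset.range w, 2 / ((w : ℝ) - i) :=
          Fin.sum_univ_eq_sum_range (fun i => 2 / ((w : ℝ) - i)) w
  · have h3 : ∑ i ∈ Finset.range w, 2 / ((w : ℝ) - i)
        = ∑ j ∈ Finset.range w, 2 / ((j : ℝ) + 1) := by
      rw [← Finset.sum_range_reflect (fun j => 2 / ((j : ℝ) + 1)) w]
      refine sum_congr rfl fun i hi => ?_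
      rw [mem_range] at hi
      congr 1
      have h4 : (w - 1 - i : ℕ) = w - (i + 1) := by omega
      rw [h4, Nat.cast_sub (by omega)]
      push_cast
      ring
    have h5 : ∑ j ∈ Finset.range w, 2 / ((j : ℝ) + 1) = 2 * ((harmonic w : ℚ) : ℝ) := by
      rw [harmonic]
      push_cast
      rw [mul_sum]
      refine sum_congr rfl fun j _ => ?_
      rw [div_eq_mul_inv]
    rw [h3, h5]
    have h6 := harmonic_le_one_add_log w
    have h7 : ((harmonic w : ℚ) : ℝ) ≤ 1 + Real.log w := h6
    linarith
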